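/- arXiv:2107.14326 — 4 statements merged into one kernel-verified Lean document; each statement's English description precedes it below -/
import Mathlib

section
/- (Lemma 1.) Let q = (q0,q1,q2,q3) be a unit quaternion, let p_U, p_I ∈ ℝ³, let a, b, c ∈ ℝ, and set w = p_I + R(q)·p_U. The 3×3 matrix δp whose rows are (0,0,0) − w, (0,a,0) − w and (b,c,0) − w is invertible (full rank) if and only if a ≠ 0, b ≠ 0, and the third component w_z of w is nonzero; that is, if and only if the three anchors (0,0,0), (0,a,0), (b,c,0) are non-collinear and the mobile radio position w does not lie in the plane (z = 0) spanned by the three anchors. -/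
open Matrix

/-- The rotation matrix associated to a (unit) quaternion `(q0, q1, q2, q3)`. -/
noncomputable def rotOfQuat (q0 q1 q2 q3 : ℝ) : Matrix (Fin 3) (Fin 3) ℝ :=
  !![q0^2 + q1^2 - q2^2 - q3^2, 2*(q1*q2 - q0*q3), 2*(q1*q3 + q0*q2);
     2*(q1*q2 + q0*q3), q0^2 - q1^2 + q2^2 - q3^2, 2*(q2*q3 - q0*q1);
     2*(q1*q3 - q0*q2), 2*(q2*q3 + q0*q1), q0^2 - q1^2 - q2^2 + q3^2]

theorem stmt_1 (q0 q1 q2 q3 : ℝ) (hq : q0^2 + q1^2 + q2^2 + q3^2 = 1)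
    (pU pI : Fin 3 → ℝ) (a b c : ℝ)
    (w : Fin 3 → ℝ) (hw : w = pI + (rotOfQuat q0 q1 q2 q3).mulVec pU)
    (δp : Matrix (Fin 3) (Fin 3) ℝ)
    (hδp : δp = Matrix.of
      ![(![0, 0, 0] : Fin 3 → ℝ) - w, (![0, a, 0] : Fin 3 → ℝ) - w,
        (![b, c, 0] : Fin 3 → ℝ) - w]) :
    IsUnit δp ↔ (a ≠ 0 ∧ b ≠ 0 ∧ w 2 ≠ 0) := by
  have hdet : δp.det = a * b * w 2 := by
    rw [hδp, Matrix.det_fin_three]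
    simp only [Matrix.of_apply, Matrix.cons_val_zero, Matrix.cons_val_one, Matrix.head_cons,
      Matrix.cons_val_two, Matrix.tail_cons, Pi.sub_apply]
    simp [Fin.isValue]
    ring
  rw [Matrix.isUnit_iff_isUnit_det, isUnit_iff_ne_zero, hdet]
  constructor
  · intro h
    exact ⟨fun ha => h (by rw [ha]; ring), fun hb => h (by rw [hb]; ring),
      fun hw2 => h (by rw [hw2]; ring)⟩
  · rintro ⟨ha, hb, hw2⟩
    exact mul_ne_zero (mul_ne_zero ha hb) hw2
end

section
/- (Lemma 2, explicit polynomial form.) Let q = (q0,q1,q2,q3) be a unit quaternion, let p_U = (p_Ux, p_Uy, p_Uz), p_I = (p_Ix, p_Iy, p_Iz) ∈ ℝ³, and let p_jy, p_kx ∈ ℝ. Let h = p_Uz + p_Iz + 2 p_Uy q0 q1 − 2 p_Uz q1² − 2 p_Ux q0 q2 − 2 p_Uz q2² + 2 p_Ux q1 q3 + 2 p_Uy q2 q3 and let f1, f2, f3 be as defined in the context. If p_jy ≠ 0, p_kx ≠ 0, and the third component of p_I + R(q)·p_U is nonzero, then the three determinants D1 = −16 p_jy p_kx · h · f1, D2 =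 16 p_jy p_kx · h · f2, D3 = −16 p_jy p_kx · h · f3 are not all zero. -/
open Matrix

theorem stmt_10 (q0 q1 q2 q3 : ℝ) (hq : q0^2 + q1^2 + q2^2 + q3^2 = 1)
    (pUx pUy pUz pIx pIy pIz pjy pkx : ℝ)
    (h : ℝ)
    (hh : h = pUz + pIz + 2*pUy*q0*q1 - 2*pUz*q1^2 - 2*pUx*q0*q2 - 2*pUz*q2^2
        + 2*pUx*q1*q3 + 2*pUy*q2*q3)
    (f1 f2 f3 : ℝ)
    (hf1 : f1 = pUz + pIz - 2*pIy*q0*q1 - 2*pIz*q1^2 + 2*pIx*q0*q2 - 2*pIz*q2^2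
        + 2*pIx*q1*q3 + 2*pIy*q2*q3)
    (hf2 : f2 = pUy + pIy + 2*pIz*q0*q1 - 2*pIy*q1^2 + 2*pIx*q1*q2 - 2*pIx*q0*q3
        + 2*pIz*q2*q3 - 2*pIy*q3^2)
    (hf3 : f3 = pUx + pIx - 2*pIz*q0*q2 + 2*pIy*q1*q2 - 2*pIx*q2^2 + 2*pIy*q0*q3
        + 2*pIz*q1*q3 - 2*pIx*q3^2)
    (D1 D2 D3 : ℝ)
    (hD1 : D1 = -16 * pjy * pkx * h * f1)
    (hD2 : D2 = 16 * pjy * pkx * h * f2)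
    (hD3 : D3 = -16 * pjy * pkx * h * f3)
    (hjy : pjy ≠ 0) (hkx : pkx ≠ 0)
    (hz : ((![pIx, pIy, pIz] : Fin 3 → ℝ)
        + (rotOfQuat q0 q1 q2 q3).mulVec ![pUx, pUy, pUz]) 2 ≠ 0) :
    ¬ (D1 = 0 ∧ D2 = 0 ∧ D3 = 0) := by
  rintro ⟨h1, h2, h3⟩
  have hzv : pIz + (pUx*(2*(q1*q3 - q0*q2)) + (pUy*(2*(q2*q3 + q0*q1))
      + pUz*(q0^2 - q1^2 - q2^2 + q3^2))) ≠ 0 := by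
    simpa [rotOfQuat, Matrix.mulVec, dotProduct, Fin.sum_univ_succ] using hz
  have hne : h ≠ 0 := by
    intro h0
    apply hzv
    linear_combination h0 - hh + pUz * hq
  have hc : (-16 : ℝ) * pjy * pkx * h ≠ 0 := by
    intro hc0
    rcases mul_eq_zero.mp hc0 with hc1 | hc1
    · rcases mul_eq_zero.mp hc1 with hc2 | hc2
      · rcases mul_eq_zero.mp hc2 with hc3 | hc3
        · norm_num at hc3
        · exact hjy hc3
      · exact hkx hc2
    · exact hne hc1
  have e1 : f1 = 0 := by
    have := h1
    rw [hD1] at this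
    exact (mul_eq_zero.mp this).resolve_left hc
  have e2 : f2 = 0 := by
    have h2' : (-16 : ℝ) * pjy * pkx * h * (-f2) = 0 := by
      rw [hD2] at h2; linear_combination h2
    have := (mul_eq_zero.mp h2').resolve_left hc
    linarith
  have e3 : f3 = 0 := by
    have := h3
    rw [hD3] at this
    exact (mul_eq_zero.mp this).resolve_left hc
  apply hne
  rw [hh]; rw [hf1] at e1; rw [hf2] at e2; rw [hf3] at e3
  linear_combination (2*(q1*q3-q0*q2))*e3 + (2*(q2*q3+q0*q1))*e2
    + (q0^2-q1^2-q2^2+q3^2)*e1 + (-pIz - pUz + 2*q2*q3*pIy - 2*q2^2*pIz + 2*q1*q3*pIx - 2*q1^2*pIz - 2*q0*q2*pIx + 2*q0*q1*pIy)*hq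
end

section
/- (Key constraint claim in the proofs of Lemmas 3 and 4.) Let q = (q0,q1,q2,q3) be a unit quaternion and let p_U = (p_Ux, p_Uy, p_Uz), p_I = (p_Ix, p_Iy, p_Iz) ∈ ℝ³. If the three polynomials g1, g2, g3 defined in the context all vanish, then p_Iz + p_Ux(−2 q0 q2 + 2 q1 q3) + p_Uy(2 q0 q1 + 2 q2 q3) + p_Uz(q0² − q1² − q2² + q3²) = 0; that is, the z-coordinate of the world-frame position p_I + R(q)·p_U of the mobile radio is zero. Equivalently, if this z-coordinate is nonzero, then g1, g2, g3 cannot vanish simultaneously. -/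
open Matrix

theorem stmt_11 (q0 q1 q2 q3 : ℝ) (hq : q0^2 + q1^2 + q2^2 + q3^2 = 1)
    (pUx pUy pUz pIx pIy pIz : ℝ)
    (g1 g2 g3 : ℝ)
    (hg1 : g1 = pUz + pIz + 2*pUy*q0*q1 - 2*pUz*q1^2 + 2*pIx*q0*q2 - 2*pIz*q2^2
        - 2*pIx*q1*q3 - 2*pUy*q2*q3 - 2*pUz*q3^2 - 2*pIz*q3^2)
    (hg2 : g2 = pUx*q0*q1 + pIx*q0*q1 + pUz*q1*q2 - pIz*q1*q2 + pUz*q0*q3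
        + pIz*q0*q3 - pUx*q2*q3 + pIx*q2*q3)
    (hg3 : g3 = pUx + pIx - 2*pUx*q1^2 - 2*pIx*q1^2 - 2*pIz*q0*q2 - 2*pUy*q1*q2
        - 2*pIx*q2^2 - 2*pUy*q0*q3 - 2*pIz*q1*q3 - 2*pUx*q3^2) :
    ((g1 = 0 ∧ g2 = 0 ∧ g3 = 0) →
      pIz + pUx*(-2*q0*q2 + 2*q1*q3) + pUy*(2*q0*q1 + 2*q2*q3)
        + pUz*(q0^2 - q1^2 - q2^2 + q3^2) = 0) ∧
    (pIz + pUx*(-2*q0*q2 + 2*q1*q3) + pUy*(2*q0*q1 + 2*q2*q3)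
        + pUz*(q0^2 - q1^2 - q2^2 + q3^2) ≠ 0 →
      ¬ (g1 = 0 ∧ g2 = 0 ∧ g3 = 0)) := by
  have key : (g1 = 0 ∧ g2 = 0 ∧ g3 = 0) →
      pIz + pUx*(-2*q0*q2 + 2*q1*q3) + pUy*(2*q0*q1 + 2*q2*q3)
        + pUz*(q0^2 - q1^2 - q2^2 + q3^2) = 0 := by
    rintro ⟨h1, h2, h3⟩
    have e1 := hg1.symm.trans h1
    have e2 := hg2.symm.trans h2
    have e3 := hg3.symm.trans h3
    linear_combination (q0^2 + q1^2 - q2^2 - q3^2) * e1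
      - 2 * (2*q1*q2 - 2*q0*q3) * e2 - (2*q1*q3 + 2*q0*q2) * e3
      + ((-1)*pIz + (-2)*q3^2*pIz + (-2)*q3^2*pUz + (-2)*q2*q3*pUy + (-2)*q2^2*pIz
        + (-2)*q1*q3*pIx + (-4)*q1*q3*pUx + 2*q1^2*pUz + (-2)*q0*q2*pIx
        + (-2)*q0*q1*pUy) * hq
  exact ⟨key, fun hne h => hne (key h)⟩
end

section
/- (Lemmas 3 and 4, explicit polynomial form.) Let q = (q0,q1,q2,q3) be a unit quaternion, let p_U = (p_Ux, p_Uy, p_Uz), p_I = (p_Ix, p_Iy, p_Iz) ∈ ℝ³, and let p_jy ∈ ℝ. Let f1, f2, f3 and g1, g2, g3 be the explicit polynomials defined in the context. If p_jy ≠ 0 and the third component of p_I + R(q)·p_U is nonzero, then the nine products p_jy · f_i · g_j (i, j ∈ {1,2,3}), which are, up to nonzero constant factors, the nine row-selection determinants of the 9×3 matrices F13·R − F15 (Lemma 3) and F5·F3 + F18 (Lemma 4) of the observability analysis, are not all zero. -/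
open Matrix

theorem stmt_12 (q0 q1 q2 q3 : ℝ) (hq : q0^2 + q1^2 + q2^2 + q3^2 = 1)
    (pUx pUy pUz pIx pIy pIz pjy : ℝ)
    (f1 f2 f3 g1 g2 g3 : ℝ)
    (hf1 : f1 = pUz + pIz - 2*pIy*q0*q1 - 2*pIz*q1^2 + 2*pIx*q0*q2 - 2*pIz*q2^2
        + 2*pIx*q1*q3 + 2*pIy*q2*q3)
    (hf2 : f2 = pUy + pIy + 2*pIz*q0*q1 - 2*pIy*q1^2 + 2*pIx*q1*q2 - 2*pIx*q0*q3
        + 2*pIz*q2*q3 - 2*pIy*q3^2)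
    (hf3 : f3 = pUx + pIx - 2*pIz*q0*q2 + 2*pIy*q1*q2 - 2*pIx*q2^2 + 2*pIy*q0*q3
        + 2*pIz*q1*q3 - 2*pIx*q3^2)
    (hg1 : g1 = pUz + pIz + 2*pUy*q0*q1 - 2*pUz*q1^2 + 2*pIx*q0*q2 - 2*pIz*q2^2
        - 2*pIx*q1*q3 - 2*pUy*q2*q3 - 2*pUz*q3^2 - 2*pIz*q3^2)
    (hg2 : g2 = pUx*q0*q1 + pIx*q0*q1 + pUz*q1*q2 - pIz*q1*q2 + pUz*q0*q3
        + pIz*q0*q3 - pUx*q2*q3 + pIx*q2*q3)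
    (hg3 : g3 = pUx + pIx - 2*pUx*q1^2 - 2*pIx*q1^2 - 2*pIz*q0*q2 - 2*pUy*q1*q2
        - 2*pIx*q2^2 - 2*pUy*q0*q3 - 2*pIz*q1*q3 - 2*pUx*q3^2)
    (hjy : pjy ≠ 0)
    (hz : ((![pIx, pIy, pIz] : Fin 3 → ℝ)
        + (rotOfQuat q0 q1 q2 q3).mulVec ![pUx, pUy, pUz]) 2 ≠ 0) :
    ¬ ∀ i j : Fin 3,
        pjy * ((![f1, f2, f3] : Fin 3 → ℝ) i) * ((![g1, g2, g3] : Fin 3 → ℝ) j) = 0 := by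
  intro h
  have P : ∀ i j : Fin 3,
      ((![f1, f2, f3] : Fin 3 → ℝ) i) * ((![g1, g2, g3] : Fin 3 → ℝ) j) = 0 := by
    intro i j
    have := h i j
    rw [mul_assoc] at this
    exact (mul_eq_zero.mp this).resolve_left hjy
  have hZ : pIz + 2*(q1*q3 - q0*q2)*pUx + 2*(q2*q3 + q0*q1)*pUy
      + (q0^2 - q1^2 - q2^2 + q3^2)*pUz ≠ 0 := by
    intro h0
    apply hz
    simp [rotOfQuat, mulVec, dotProduct, Fin.sum_univ_three]
    linear_combination h0
  apply hZ
  -- key identities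
  have idf : (q0^2 - q1^2 - q2^2 + q3^2)*f1 + 2*(q2*q3 + q0*q1)*f2 + 2*(q1*q3 - q0*q2)*f3
      = pIz + 2*(q1*q3 - q0*q2)*pUx + 2*(q2*q3 + q0*q1)*pUy
      + (q0^2 - q1^2 - q2^2 + q3^2)*pUz := by
    subst hf1 hf2 hf3
    linear_combination (pIz - 2*q2*q3*pIy + 2*q2^2*pIz - 2*q1*q3*pIx + 2*q1^2*pIz
      + 2*q0*q2*pIx - 2*q0*q1*pIy) * hq
  have idg : (1 - 2*q2^2 - 2*q3^2)*g1 + 4*(q0*q3 - q1*q2)*g2 - 2*(q1*q3 + q0*q2)*g3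
      = pIz + 2*(q1*q3 - q0*q2)*pUx + 2*(q2*q3 + q0*q1)*pUy
      + (q0^2 - q1^2 - q2^2 + q3^2)*pUz := by
    subst hg1 hg2 hg3
    linear_combination (-pUz + 4*q3^2*pIz + 4*q3^2*pUz + 4*q2*q3*pUy + 4*q2^2*pIz
      + 4*q1*q3*pIx + 4*q1*q3*pUx) * hq
  by_cases hF : f1 = 0 ∧ f2 = 0 ∧ f3 = 0
  · obtain ⟨e1, e2, e3⟩ := hF
    rw [e1, e2, e3] at idf
    linarith [idf]
  · have hGall : g1 = 0 ∧ g2 = 0 ∧ g3 = 0 := by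
      rcases not_and_or.mp hF with h1 | h23
      · exact ⟨by have := P 0 0; simpa using (mul_eq_zero.mp (by simpa using this)).resolve_left h1,
          by have := P 0 1; simpa using (mul_eq_zero.mp (by simpa using this)).resolve_left h1,
          by have := P 0 2; simpa using (mul_eq_zero.mp (by simpa using this)).resolve_left h1⟩
      rcases not_and_or.mp h23 with h2 | h3
      · exact ⟨by have := P 1 0; simpa using (mul_eq_zero.mp (by simpa using this)).resolve_left h2,
          by have := P 1 1; simpa using (mul_eq_zero.mp (by simpa using this)).resolve_left h2,
          by have := P 1 2; simpa using (mul_eq_zero.mp (by simpa using this)).resolve_left h2⟩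
      · exact ⟨by have := P 2 0; simpa using (mul_eq_zero.mp (by simpa using this)).resolve_left h3,
          by have := P 2 1; simpa using (mul_eq_zero.mp (by simpa using this)).resolve_left h3,
          by have := P 2 2; simpa using (mul_eq_zero.mp (by simpa using this)).resolve_left h3⟩
    obtain ⟨e1, e2, e3⟩ := hGall
    rw [e1, e2, e3] at idg
    linarith [idg]
end
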